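/- If μ is a probability measure on a finite semigroup S with μ*μ = μ, then the support 𝒮(μ) is a subsemigroup of S. -/

import Mathlib

open scoped Classical

/-- Convolution of two probability mass functions on a finite semigroup. -/
noncomputable def semigroupConv {S : Type*} [Semigroup S] [Fintype S]
    (μ ν : S → ℝ) : S → ℝ :=
  fun x => ∑ f : S, ∑ g : S, if f * g = x then μ f * ν g else 0

/-- If `μ` is an idempotent probability (`μ*μ = μ`) on a finite semigroup, then its
support `𝒮(μ)` is a subsemigroup. -/
theorem stmt_10 {S : Type*} [Semigroup S] [Fintype S]
    (μ : S → ℝ) (hμ0 : ∀ s, 0 ≤ μ s) (hμ1 : ∑ s : S, μ s = 1)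
    (hidem : semigroupConv μ μ = μ) :
    ∀ f g : S, 0 < μ f → 0 < μ g → 0 < μ (f * g) := by
  intro f g hf hg
  have h := congrFun hidem (f * g)
  rw [← h]
  unfold semigroupConv
  have key : μ f * μ g ≤ ∑ a : S, ∑ b : S, if a * b = f * g then μ a * μ b else 0 := by
    have h1 : μ f * μ g ≤ ∑ b : S, if f * b = f * g then μ f * μ b else 0 := by
      have := Finset.single_le_sum (f := fun b => if f * b = f * g then μ f * μ b else 0)
        (fun b _ => by split <;> [exact mul_nonneg (hμ0 f) (hμ0 b); exact le_rfl]) (Finset.mem_univ g)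
      simpa using this
    calc μ f * μ g ≤ ∑ b : S, if f * b = f * g then μ f * μ b else 0 := h1
      _ ≤ ∑ a : S, ∑ b : S, if a * b = f * g then μ a * μ b else 0 := by
          apply Finset.single_le_sum (f := fun a => ∑ b : S, if a * b = f * g then μ a * μ b else 0)
          · intro a _
            apply Finset.sum_nonneg
            intro b _
            split
            · exact mul_nonneg (hμ0 a) (hμ0 b)
            · exact le_rfl
          · exact Finset.mem_univ f
  exact lt_of_lt_of_le (mul_pos hf hg) key
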